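/- Let f ∈ ℂ[x,y] be a square-free polynomial and let h = gcd(f_x, f_y) ∈ ℂ[x,y] be a greatest common divisor of its partial derivatives. Then h does not vanish at any x-critical point of the curve C = V(f); that is, for every point p with f(p) = f_y(p) = 0 one has h(p) ≠ 0. -/

import Mathlib

open Polynomial

noncomputable section

/-- The polynomial ring `ℂ[x][y]` (inner variable `x`, outer variable `y`),
    our model of the bivariate polynomial ring `ℂ[x,y]`. -/
abbrev CXY := Polynomial (Polynomial ℂ)

/-- The partial derivative `∂f/∂y`. -/
noncomputable def dY (f : CXY) : CXY := derivative f

/-- The partial derivative `∂f/∂x`. -/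
noncomputable def dX (f : CXY) : CXY := f.sum fun n a => C (derivative a) * X ^ n

/-- The univariate polynomial `f(α, y) ∈ ℂ[y]`. -/
noncomputable def fiber (f : CXY) (α : ℂ) : Polynomial ℂ := f.map (evalRingHom α)

/-- The value `f(α, β)`. -/
noncomputable def evalAt (α β : ℂ) (f : CXY) : ℂ := (fiber f α).eval β

/-- The ring `ℂ[x,y]` as a multivariate polynomial ring. -/
abbrev MvC := MvPolynomial (Fin 2) ℂ

/-- The canonical identification `ℂ[x][y] → ℂ[x,y]`, `x ↦ X 0`, `y ↦ X 1`. -/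
noncomputable def toMv : CXY →+* MvC :=
  Polynomial.eval₂RingHom (Polynomial.eval₂RingHom MvPolynomial.C (MvPolynomial.X 0))
    (MvPolynomial.X 1)

/-- The maximal ideal of `ℂ[x,y]` corresponding to the point `p ∈ ℂ²`. -/
noncomputable def maxIdeal (p : ℂ × ℂ) : Ideal MvC :=
  RingHom.ker (MvPolynomial.eval fun i => if i = 0 then p.1 else p.2)

instance maxIdeal_isMaximal (p : ℂ × ℂ) : (maxIdeal p).IsMaximal :=
  RingHom.ker_isMaximal_of_surjective _ fun c => ⟨MvPolynomial.C c, by simp [maxIdeal]⟩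

/-- The localization of the quotient ring `ℂ[x,y]/(f,g)` at (the maximal ideal of) `p`;
    equivalently, the quotient of the local ring of `ℂ[x,y]` at `p` by (the image of) `(f,g)`. -/
abbrev LocQuot (f g : CXY) (p : ℂ × ℂ) :=
  Localization.AtPrime (maxIdeal p) ⧸
    Ideal.span {algebraMap MvC (Localization.AtPrime (maxIdeal p)) (toMv f),
      algebraMap MvC (Localization.AtPrime (maxIdeal p)) (toMv g)}

/-- The intersection multiplicity `Int(f,g,p)`: the dimension, as a `ℂ`-vector space (a
    cardinal in general), of the localization of `ℂ[x,y]/(f,g)` at `p`. -/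
noncomputable def IntRank (f g : CXY) (p : ℂ × ℂ) : Cardinal := Module.rank ℂ (LocQuot f g p)

/-- The intersection multiplicity `Int(f,g,p)` as a natural number (the `finrank` of the
    localization of `ℂ[x,y]/(f,g)` at `p` as a `ℂ`-vector space). -/
noncomputable def IntMult (f g : CXY) (p : ℂ × ℂ) : ℕ := Module.finrank ℂ (LocQuot f g p)

/-- The Sylvester matrix of two univariate polynomials `f` and `g` over a commutative ring. -/
noncomputable def sylvester {R : Type*} [CommRing R] (f g : Polynomial R) :
    Matrix (Fin (g.natDegree + f.natDegree)) (Fin (g.natDegree + f.natDegree)) R :=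
  Matrix.of fun i j =>
    if (j : ℕ) < g.natDegree then
      (if (j : ℕ) ≤ (i : ℕ) then f.coeff ((i : ℕ) - (j : ℕ)) else 0)
    else
      (if (j : ℕ) - g.natDegree ≤ (i : ℕ) then g.coeff ((i : ℕ) - ((j : ℕ) - g.natDegree)) else 0)

/-- The resultant of two univariate polynomials, as the determinant of their Sylvester
    matrix.  For `f g : CXY = (ℂ[x])[y]` this is the resultant `res_y(f,g) ∈ ℂ[x]`
    with respect to `y`. -/
noncomputable def resultant {R : Type*} [CommRing R] (f g : Polynomial R) : R :=
  (_root_.sylvester f g).det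

lemma coeff_dX (f : CXY) (n : ℕ) : (dX f).coeff n = derivative (f.coeff n) := by
  rw [dX, Polynomial.sum, finset_sum_coeff]
  simp only [coeff_C_mul, coeff_X_pow, mul_ite, mul_one, mul_zero]
  rw [Finset.sum_ite_eq f.support n (fun k => derivative (f.coeff k))]
  split_ifs with hn
  · rfl
  · rw [notMem_support_iff.mp hn, map_zero]

lemma dX_add (p q : CXY) : dX (p + q) = dX p + dX q := by
  ext n; simp [coeff_dX]

lemma dX_C (a : Polynomial ℂ) : dX (C a) = C (derivative a) := by
  ext n; cases n <;> simp [coeff_dX, coeff_C]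

lemma dX_mul (p q : CXY) : dX (p * q) = dX p * q + p * dX q := by
  ext1 n
  rw [coeff_dX, coeff_add, coeff_mul, coeff_mul, coeff_mul, map_sum, ← Finset.sum_add_distrib]
  refine Finset.sum_congr rfl fun x _ => ?_
  rw [coeff_dX, coeff_dX, derivative_mul]

lemma dX_X : dX (X : CXY) = 0 := by
  ext1 n; simp [coeff_dX, coeff_X]
  split_ifs <;> simp

lemma dX_comp (M f : CXY) :
    dX (M.comp f) = (dX M).comp f + (derivative M).comp f * dX f := by
  induction M using Polynomial.induction_on with
  | C a => simp [dX_C]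
  | add p q hp hq =>
      rw [add_comp, dX_add, hp, hq, dX_add, derivative_add, add_comp, add_comp]
      ring
  | monomial n a ih =>
      rw [show (C a * X ^ (n+1)) = (C a * X ^ n) * X by ring, mul_comp, dX_mul, ih, X_comp]
      simp only [dX_mul, dX_X, derivative_mul, derivative_X, add_comp, mul_comp, X_comp,
        mul_zero, zero_mul, mul_one, add_zero, zero_add]
      ring

lemma notDvd_C {q : CXY} (hdeg : 1 ≤ q.natDegree) {a : Polynomial ℂ} (ha : a ≠ 0) :
    ¬ q ∣ C a := by
  intro hd
  have h1 := natDegree_le_of_dvd hd (by simpa using ha)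
  rw [natDegree_C] at h1
  omega

lemma not_dvd_dY {q : CXY} (hdeg : 1 ≤ q.natDegree) : ¬ q ∣ dY q := by
  have hne : dY q ≠ 0 := by
    intro h
    have := natDegree_eq_zero_of_derivative_eq_zero (p := q) h
    omega
  intro hdvd
  have h1 := natDegree_le_of_dvd hdvd hne
  have h2 := natDegree_derivative_lt (p := q) (by omega)
  rw [dY] at h1
  omega

lemma wronskian_dvd {a b : Polynomial ℂ} (ha : a ≠ 0)
    (h : derivative b * a = b * derivative a) : a ∣ b := by
  obtain ⟨a1, b1, c, hrel, hca, hcb⟩ :=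
    UniqueFactorizationMonoid.exists_reduced_factors a ha b
  have hc : c ≠ 0 := by rintro rfl; rw [zero_mul] at hca; exact ha hca.symm
  have ha1 : a1 ≠ 0 := by rintro rfl; rw [mul_zero] at hca; exact ha hca.symm
  have key : derivative b1 * a1 = b1 * derivative a1 := by
    have e : c * c * (derivative b1 * a1) + c * (derivative c * (b1 * a1))
        = c * c * (b1 * derivative a1) + c * (derivative c * (b1 * a1)) := by
      calc c * c * (derivative b1 * a1) + c * (derivative c * (b1 * a1))
          = derivative (c * b1) * (c * a1) := by rw [derivative_mul]; ring
        _ = (c * b1) * derivative (c * a1) := by rw [hca, hcb]; exact h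
        _ = c * c * (b1 * derivative a1) + c * (derivative c * (b1 * a1)) := by
            rw [derivative_mul]; ring
    exact mul_left_cancel₀ (mul_ne_zero hc hc) (add_right_cancel e)
  have hdvd : a1 ∣ b1 * derivative a1 := ⟨derivative b1, by rw [← key]; ring⟩
  have ha1d : a1 ∣ derivative a1 := hrel.dvd_of_dvd_mul_left hdvd
  have ha1' : derivative a1 = 0 := by
    by_contra hne
    have h1 := natDegree_le_of_dvd ha1d hne
    have h2 : a1.natDegree ≠ 0 := by
      intro h0
      rw [eq_C_of_natDegree_eq_zero h0] at hne
      simp at hne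
    have := natDegree_derivative_lt h2
    omega
  have hu : IsUnit a1 := by
    rw [eq_C_of_derivative_eq_zero ha1'] at ha1 ⊢
    rw [Polynomial.isUnit_C]
    exact isUnit_iff_ne_zero.mpr (by simpa using ha1)
  calc a = c * a1 := hca.symm
    _ ∣ c * b1 := mul_dvd_mul_left c (hu.dvd)
    _ = b := hcb

lemma wronskian_scalar {a b : Polynomial ℂ} (ha : a ≠ 0)
    (h : derivative b * a = b * derivative a) : ∃ l : ℂ, b = C l * a := by
  obtain ⟨u, rfl⟩ := wronskian_dvd ha h
  rw [derivative_mul] at h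
  have h2 : a * a * derivative u = 0 := by linear_combination h
  have hu : derivative u = 0 := by
    rcases mul_eq_zero.mp h2 with h | h
    · exact absurd h (mul_ne_zero ha ha)
    · exact h
  refine ⟨u.coeff 0, ?_⟩
  conv_lhs => rw [eq_C_of_derivative_eq_zero hu]
  ring

lemma exists_alg_rel (q f : CXY) (hq : Irreducible q) (hdeg : 1 ≤ q.natDegree) :
    ∃ M : CXY, M ≠ 0 ∧ q ∣ M.comp f := by
  classical
  set K := FractionRing (Polynomial ℂ) with hK
  have hinj : Function.Injective (algebraMap (Polynomial ℂ) K) :=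
    IsFractionRing.injective (Polynomial ℂ) K
  have hprim : q.IsPrimitive := by
    intro r hr
    obtain ⟨w, hw⟩ := hr
    rcases hq.isUnit_or_isUnit hw with hcu | hcu
    · exact Polynomial.isUnit_C.mp hcu
    · exfalso
      have hr0 : r ≠ 0 := by rintro rfl; rw [map_zero, zero_mul] at hw; exact hq.ne_zero hw
      have hw0 : w ≠ 0 := by rintro rfl; rw [mul_zero] at hw; exact hq.ne_zero hw
      have hnd := natDegree_mul (show (C r : CXY) ≠ 0 by simpa using hr0) hw0
      rw [← hw, natDegree_C, natDegree_eq_zero_of_isUnit hcu] at hnd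
      omega
  have hQirr : Irreducible (q.map (algebraMap (Polynomial ℂ) K)) :=
    (hprim.irreducible_iff_irreducible_map_fraction_map).mp hq
  haveI := Fact.mk hQirr
  have hQ0 : q.map (algebraMap (Polynomial ℂ) K) ≠ 0 := fun hcon =>
    hq.ne_zero (Polynomial.map_injective _ hinj (by simpa using hcon))
  haveI : Module.Finite K (AdjoinRoot (q.map (algebraMap (Polynomial ℂ) K))) :=
    (AdjoinRoot.powerBasis hQ0).finite
  set ξ : AdjoinRoot (q.map (algebraMap (Polynomial ℂ) K)) :=
    AdjoinRoot.mk _ (f.map (algebraMap (Polynomial ℂ) K)) with hxi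
  have hint : IsIntegral K ξ := IsIntegral.of_finite K ξ
  set p := minpoly K ξ with hp
  have hp0 : p ≠ 0 := minpoly.ne_zero hint
  obtain ⟨b, hb⟩ :=
    IsLocalization.integerNormalization_map_to_map (nonZeroDivisors (Polynomial ℂ)) p
  set Mp : CXY := IsLocalization.integerNormalization (nonZeroDivisors (Polynomial ℂ)) p with hMp
  have hbne : algebraMap (Polynomial ℂ) K (b : Polynomial ℂ) ≠ 0 :=
    IsFractionRing.to_map_ne_zero_of_mem_nonZeroDivisors b.2
  have hMp0 : Mp ≠ 0 := by
    intro hcon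
    rw [hcon, Polynomial.map_zero] at hb
    rw [← IsScalarTower.algebraMap_smul K ((b : Polynomial ℂ)) p] at hb
    rcases smul_eq_zero.mp hb.symm with hc | hc
    · exact hbne hc
    · exact hp0 hc
  have key : AdjoinRoot.mk (q.map (algebraMap (Polynomial ℂ) K))
      ((Mp.comp f).map (algebraMap (Polynomial ℂ) K)) = 0 := by
    rw [Polynomial.map_comp]
    have hcomp : (AdjoinRoot.mk (q.map (algebraMap (Polynomial ℂ) K))).comp Polynomial.C
        = algebraMap K (AdjoinRoot (q.map (algebraMap (Polynomial ℂ) K))) := by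
      rw [AdjoinRoot.algebraMap_eq]; rfl
    rw [Polynomial.comp, Polynomial.hom_eval₂, hcomp, ← hxi, ← aeval_def, hb]
    rw [← IsScalarTower.algebraMap_smul K ((b : Polynomial ℂ)) p, smul_eq_C_mul, map_mul,
      aeval_C, hp, minpoly.aeval, mul_zero]
  rw [AdjoinRoot.mk_eq_zero] at key
  obtain ⟨W, hW⟩ := key
  obtain ⟨d, hd⟩ :=
    IsLocalization.integerNormalization_map_to_map (nonZeroDivisors (Polynomial ℂ)) W
  set W0 : CXY := IsLocalization.integerNormalization (nonZeroDivisors (Polynomial ℂ)) W with hW0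
  have hmain : Polynomial.C (d : Polynomial ℂ) * (Mp.comp f) = q * W0 := by
    apply Polynomial.map_injective _ hinj
    rw [Polynomial.map_mul, Polynomial.map_mul, Polynomial.map_C, hW, hd,
      ← IsScalarTower.algebraMap_smul K ((d : Polynomial ℂ)) W, smul_eq_C_mul]
    ring
  have hd0 : (d : Polynomial ℂ) ≠ 0 := nonZeroDivisors.ne_zero d.2
  refine ⟨Polynomial.C (d : Polynomial ℂ) * Mp, mul_ne_zero (by simpa using hd0) hMp0, ?_⟩
  rw [mul_comp, C_comp, hmain]
  exact dvd_mul_right q W0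

lemma exists_const_poly (q f : CXY) (hq : Prime q) (hdeg : 1 ≤ q.natDegree)
    (hqx : q ∣ dX f) (hqy : q ∣ dY f)
    (M0 : CXY) (hM0 : M0 ≠ 0) (hM0c : q ∣ M0.comp f) :
    ∃ N : Polynomial ℂ, N ≠ 0 ∧ q ∣ (N.map Polynomial.C).comp f := by
  classical
  have closure : ∀ M : CXY, q ∣ M.comp f → q ∣ (dX M).comp f := by
    intro M hM
    obtain ⟨u, hu⟩ := hM
    have hqu : q ∣ u := by
      have h1 : q ∣ dY (M.comp f) := by
        rw [dY, derivative_comp]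
        exact (hqy).mul_right _
      rw [hu] at h1
      rw [show dY (q * u) = dY q * u + q * dY u from derivative_mul] at h1
      have h3 : q ∣ dY q * u := by
        have := dvd_sub h1 (dvd_mul_right q (dY u))
        simpa using this
      rcases hq.dvd_or_dvd h3 with hcon | hok
      · exact absurd hcon (not_dvd_dY hdeg)
      · exact hok
    have h5 : q ∣ dX (M.comp f) := by
      rw [hu, dX_mul]
      exact dvd_add (hqu.mul_left (dX q)) (dvd_mul_right q _)
    have h7 : q ∣ (derivative M).comp f * dX f := hqx.mul_left _
    have heq : (dX M).comp f = dX (M.comp f) - (derivative M).comp f * dX f := by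
      rw [dX_comp]; ring
    rw [heq]
    exact dvd_sub h5 h7
  have hPex : ∃ n, ∃ M : CXY, (M ≠ 0 ∧ q ∣ M.comp f) ∧ M.natDegree = n :=
    ⟨M0.natDegree, M0, ⟨hM0, hM0c⟩, rfl⟩
  obtain ⟨M, ⟨hMne, hMc⟩, hMdeg⟩ := Nat.find_spec hPex
  set m := Nat.find hPex with hm
  set a := M.leadingCoeff with ha
  have ha0 : a ≠ 0 := leadingCoeff_ne_zero.mpr hMne
  set P : CXY := Polynomial.C (derivative a) * M - Polynomial.C a * dX M with hP
  have hPdvd : q ∣ P.comp f := by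
    rw [hP, sub_comp, mul_comp, mul_comp, C_comp, C_comp]
    exact dvd_sub (hMc.mul_left _) ((closure M hMc).mul_left _)
  have hcoeff : ∀ k, m ≤ k → P.coeff k = 0 := by
    intro k hk
    rw [hP, coeff_sub, coeff_C_mul, coeff_C_mul, coeff_dX]
    rcases eq_or_lt_of_le hk with heq | hlt
    · have hck : M.coeff k = a := by
        rw [ha, leadingCoeff, hMdeg, ← heq]
      rw [hck]; ring
    · have hck : M.coeff k = 0 := coeff_eq_zero_of_natDegree_lt (by omega)
      rw [hck]; simp
  have hP0 : P = 0 := by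
    by_contra hPne
    have hlt : P.natDegree < m := by
      by_contra hge
      exact (leadingCoeff_ne_zero.mpr hPne) (hcoeff _ (le_of_not_gt hge))
    exact Nat.find_min hPex hlt ⟨P, ⟨hPne, hPdvd⟩, rfl⟩
  have hrel : ∀ n : ℕ, derivative (M.coeff n) * a = M.coeff n * derivative a := by
    intro n
    have hcn : P.coeff n = 0 := by rw [hP0, coeff_zero]
    rw [hP, coeff_sub, coeff_C_mul, coeff_C_mul, coeff_dX] at hcn
    linear_combination -hcn
  have hl : ∀ n : ℕ, ∃ l : ℂ, M.coeff n = Polynomial.C l * a := fun n =>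
    wronskian_scalar ha0 (hrel n)
  choose l hlspec using hl
  set N : Polynomial ℂ := ∑ n ∈ M.support, Polynomial.monomial n (l n) with hN
  have hMeq : M = Polynomial.C a * N.map Polynomial.C := by
    ext1 n
    rw [coeff_C_mul, coeff_map, hN, finset_sum_coeff]
    simp only [coeff_monomial]
    rw [Finset.sum_ite_eq' M.support n l]
    split_ifs with hn
    · rw [hlspec n]; ring
    · rw [notMem_support_iff.mp hn, map_zero, mul_zero]
  have hNne : N ≠ 0 := by
    intro hcon
    rw [hcon, Polynomial.map_zero, mul_zero] at hMeq
    exact hMne hMeq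
  refine ⟨N, hNne, ?_⟩
  have : q ∣ Polynomial.C a * (N.map Polynomial.C).comp f := by
    rw [show Polynomial.C a * (N.map Polynomial.C).comp f
        = (Polynomial.C a * N.map Polynomial.C).comp f by rw [mul_comp, C_comp], ← hMeq]
    exact hMc
  rcases hq.dvd_or_dvd this with hcon | hok
  · exact absurd hcon (notDvd_C hdeg ha0)
  · exact hok

lemma exists_linear_dvd (q f : CXY) (hq : Prime q) (hdeg : 1 ≤ q.natDegree) :
    ∀ n : ℕ, ∀ N : Polynomial ℂ, N.natDegree ≤ n → N ≠ 0 →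
      q ∣ (N.map Polynomial.C).comp f → ∃ c : ℂ, q ∣ (f - Polynomial.C (Polynomial.C c)) := by
  intro n
  induction n with
  | zero =>
    intro N hNd hN hdvd
    have hNC : N = Polynomial.C (N.coeff 0) := eq_C_of_natDegree_eq_zero (Nat.le_zero.mp hNd)
    rw [hNC, Polynomial.map_C, C_comp] at hdvd
    have h0 : N.coeff 0 ≠ 0 := fun hcon => hN (by rw [hNC, hcon, map_zero])
    exact absurd hdvd (notDvd_C hdeg (by simpa using h0))
  | succ n ih =>
    intro N hNd hN hdvd
    by_cases h0 : N.natDegree = 0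
    · exact ih N (by omega) hN hdvd
    · have hdegpos : N.degree ≠ 0 := by
        intro hcon
        exact h0 (natDegree_eq_zero_iff_degree_le_zero.mpr (le_of_eq hcon))
      obtain ⟨r, hr⟩ := IsAlgClosed.exists_root N hdegpos
      obtain ⟨N1, hN1⟩ := dvd_iff_isRoot.mpr hr
      have hN1ne : N1 ≠ 0 := by rintro rfl; rw [mul_zero] at hN1; exact hN hN1
      have hnd := natDegree_mul (X_sub_C_ne_zero r) hN1ne
      rw [← hN1, natDegree_X_sub_C] at hnd
      have hmap : (N.map Polynomial.C).comp f
          = (f - Polynomial.C (Polynomial.C r)) * (N1.map Polynomial.C).comp f := by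
        rw [hN1, Polynomial.map_mul, mul_comp, Polynomial.map_sub, Polynomial.map_X,
          Polynomial.map_C, sub_comp, X_comp, C_comp]
      rw [hmap] at hdvd
      rcases hq.dvd_or_dvd hdvd with hcase | hcase
      · exact ⟨r, hcase⟩
      · exact ih N1 (by omega) hN1ne hcase

/-- Let `f ∈ ℂ[x,y]` be square-free and let `h = gcd(f_x, f_y)` be a greatest common
divisor of its partial derivatives.  Then `h` does not vanish at any `x`-critical point of
`C = V(f)`: for every `p = (α,β)` with `f(p) = f_y(p) = 0` one has `h(p) ≠ 0`. -/
theorem gcd_partials_not_vanishing_at_critical (f h : CXY)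
    (hsf : Squarefree f)
    (hdvd1 : h ∣ dX f) (hdvd2 : h ∣ dY f)
    (hgcd : ∀ d : CXY, d ∣ dX f → d ∣ dY f → d ∣ h)
    (α β : ℂ) (hf0 : evalAt α β f = 0) (hfy0 : evalAt α β (dY f) = 0) :
    evalAt α β h ≠ 0 := by
  classical
  intro hh0
  set E : CXY →+* ℂ := (evalRingHom β).comp (mapRingHom (evalRingHom α)) with hE
  have hEeq : ∀ g : CXY, evalAt α β g = E g := fun g => by
    simp [hE, evalAt, fiber]
  have hECC : ∀ c : ℂ, E (Polynomial.C (Polynomial.C c)) = c := fun c => by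
    simp [hE]
  have hf_ne : f ≠ 0 := by rintro rfl; exact not_squarefree_zero hsf
  have hEf : E f = 0 := by rw [← hEeq]; exact hf0
  have hh_ne : h ≠ 0 := by
    rintro rfl
    have hdx : dX f = 0 := zero_dvd_iff.mp hdvd1
    have hdy : derivative f = 0 := zero_dvd_iff.mp hdvd2
    have hfc : f = Polynomial.C (f.coeff 0) := eq_C_of_derivative_eq_zero hdy
    have hder0 : derivative (f.coeff 0) = 0 := by
      have hx := dX_C (f.coeff 0)
      rw [← hfc, hdx] at hx
      exact (C_eq_zero.mp hx.symm)
    have hfc2 : f.coeff 0 = Polynomial.C ((f.coeff 0).coeff 0) :=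
      eq_C_of_derivative_eq_zero hder0
    have hc : (f.coeff 0).coeff 0 = 0 := by
      rw [hfc, hfc2] at hEf
      rw [← hECC ((f.coeff 0).coeff 0)]
      exact hEf
    apply hf_ne
    rw [hfc, hfc2, hc, map_zero, map_zero]
  have hEh : E h = 0 := by rw [← hEeq]; exact hh0
  obtain ⟨u, hu⟩ := UniqueFactorizationMonoid.factors_prod hh_ne
  have hprodu : E (UniqueFactorizationMonoid.factors h).prod * E (u : CXY) = 0 := by
    rw [← map_mul, hu]; exact hEh
  have hEu : E (u : CXY) ≠ 0 := (u.isUnit.map E).ne_zero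
  have hprod0 : E (UniqueFactorizationMonoid.factors h).prod = 0 := by
    rcases mul_eq_zero.mp hprodu with hc | hc
    · exact hc
    · exact absurd hc hEu
  rw [map_multiset_prod] at hprod0
  obtain ⟨q, hqmem, hEq⟩ :=
    Multiset.mem_map.mp (Multiset.prod_eq_zero_iff.mp hprod0)
  have hqirr : Irreducible q := UniqueFactorizationMonoid.irreducible_of_factor q hqmem
  have hqdvdh : q ∣ h := UniqueFactorizationMonoid.dvd_of_mem_factors hqmem
  have hqx : q ∣ dX f := hqdvdh.trans hdvd1
  have hqy : q ∣ dY f := hqdvdh.trans hdvd2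
  by_cases hdeg : 1 ≤ q.natDegree
  · -- q has positive degree in y
    have hqprime : Prime q := UniqueFactorizationMonoid.irreducible_iff_prime.mp hqirr
    obtain ⟨M0, hM00, hM0c⟩ := exists_alg_rel q f hqirr hdeg
    obtain ⟨N, hN0, hNc⟩ := exists_const_poly q f hqprime hdeg hqx hqy M0 hM00 hM0c
    obtain ⟨c, hc⟩ := exists_linear_dvd q f hqprime hdeg N.natDegree N le_rfl hN0 hNc
    have hc0 : c = 0 := by
      obtain ⟨w, hw⟩ := hc
      have hEw : E f - c = E q * E w := by
        rw [← map_mul, ← hw, map_sub, hECC]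
      rw [hEf, hEq, zero_mul] at hEw
      linear_combination -hEw
    rw [hc0, map_zero, map_zero, sub_zero] at hc
    obtain ⟨g, hg⟩ := hc
    have hqg : q ∣ g := by
      have h1 : dY f = dY q * g + q * dY g := by
        rw [hg, dY, dY, dY, derivative_mul]
      have h2 : q ∣ dY q * g := by
        have := dvd_sub (h1 ▸ hqy) (dvd_mul_right q (dY g))
        simpa using this
      rcases hqprime.dvd_or_dvd h2 with hcase | hcase
      · exact absurd hcase (not_dvd_dY hdeg)
      · exact hcase
    obtain ⟨g2, hg2⟩ := hqg
    exact hqirr.not_isUnit (hsf q ⟨g2, by rw [hg, hg2]; ring⟩)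
  · -- q is a polynomial in x alone
    have hq0 : q.natDegree = 0 := by omega
    have hqC : q = Polynomial.C (q.coeff 0) := eq_C_of_natDegree_eq_zero hq0
    set a : Polynomial ℂ := q.coeff 0 with haq
    have haroot : a.eval α = 0 := by
      have : E q = a.eval α := by rw [hqC]; simp [hE]
      rw [← this]; exact hEq
    set t : CXY := Polynomial.C (X - Polynomial.C α) with ht
    have htq : t ∣ q := by
      rw [hqC, ht]
      exact map_dvd (Polynomial.C : Polynomial ℂ →+* CXY) (dvd_iff_isRoot.mpr haroot)
    have htx : t ∣ dX f := htq.trans hqx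
    have hty : t ∣ dY f := htq.trans hqy
    have hfib : (derivative f).map (evalRingHom α) = 0 := by
      obtain ⟨w, hw⟩ := hty
      rw [dY] at hw
      rw [hw, Polynomial.map_mul, ht, Polynomial.map_C]
      simp
    have hfderiv : derivative (f.map (evalRingHom α)) = 0 := by
      rw [derivative_map, hfib]
    have hfconst : f.map (evalRingHom α) = Polynomial.C ((f.map (evalRingHom α)).coeff 0) :=
      eq_C_of_derivative_eq_zero hfderiv
    have hc00 : (f.map (evalRingHom α)).coeff 0 = 0 := by
      have h1 : eval β (f.map (evalRingHom α)) = 0 := hEf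
      rw [hfconst, eval_C] at h1
      exact h1
    have hfib0 : f.map (evalRingHom α) = 0 := by rw [hfconst, hc00, map_zero]
    have htf : t ∣ f := by
      rw [ht, Polynomial.C_dvd_iff_dvd_coeff]
      intro n
      rw [dvd_iff_isRoot]
      have hcn : (f.map (evalRingHom α)).coeff n = 0 := by rw [hfib0, coeff_zero]
      rw [coeff_map] at hcn
      exact hcn
    obtain ⟨g, hg⟩ := htf
    have htg : t ∣ g := by
      have h1 : dX f = g + t * dX g := by
        rw [hg, dX_mul, ht, dX_C]
        simp
      have h2 := dvd_sub (h1 ▸ htx) (dvd_mul_right t (dX g))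
      simpa using h2
    obtain ⟨g2, hg2⟩ := htg
    have hunit : IsUnit t := hsf t ⟨g2, by rw [hg, hg2]; ring⟩
    rw [ht] at hunit
    exact Polynomial.not_isUnit_X_sub_C α (Polynomial.isUnit_C.mp hunit)
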